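/- arXiv:2210.01435 — 2 statements merged into one kernel-verified Lean document; each statement's English description precedes it below -/
import Mathlib

section
/- The function f_2(z) = ∫_0^z exp(∫_0^y (e^{t^3} − 1)/t dt) dy = z + z^4/12 + 5z^7/252 + ⋯ belongs to the class C_e, has Taylor coefficients a_2 = a_3 = a_5 = 0 and a_4 = 1/12, and satisfies |H_{3,1}(f_2)| = |2 a_2 a_3 a_4 − a_3^3 − a_4^2 − a_2^2 a_5 + a_3 a_5| = 1/144; hence the bound |H_{3,1}(f)| ≤ 1/144 on C_e is sharp. -/
open Complex Metric

/-- `f` (with Taylor coefficients `a`) belongs to the class `C_e` of convex functions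
associated with the exponential function: `f` is analytic on the unit disk,
`f(z) = z + Σ_{n ≥ 2} a_n z^n`, and there is a Schwarz function `w` with
`1 + z f''(z)/f'(z) = exp (w z)` on the disk. -/
def InCe (f : ℂ → ℂ) (a : ℕ → ℂ) : Prop :=
  AnalyticOnNhd ℂ f (ball (0 : ℂ) 1) ∧ a 0 = 0 ∧ a 1 = 1 ∧
    (∀ z ∈ ball (0 : ℂ) 1, HasSum (fun n => a n * z ^ n) (f z)) ∧
    ∃ w : ℂ → ℂ, AnalyticOnNhd ℂ w (ball (0 : ℂ) 1) ∧ w 0 = 0 ∧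
      (∀ z ∈ ball (0 : ℂ) 1, ‖w z‖ ≤ ‖z‖) ∧
      ∀ z ∈ ball (0 : ℂ) 1, 1 + z * deriv (deriv f) z / deriv f z = Complex.exp (w z)

open MeasureTheory Set in
noncomputable def hh (y : ℂ) : ℂ :=
  ∫ s in (0:ℝ)..1, (Complex.exp ((s : ℂ) ^ 3 * y ^ 3) - 1) / (s : ℂ)

open MeasureTheory Set in
noncomputable def pp (y : ℂ) : ℂ :=
  ∫ s in (0:ℝ)..1, 3 * (s : ℂ) ^ 2 * y ^ 2 * Complex.exp ((s : ℂ) ^ 3 * y ^ 3)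

noncomputable def gg (y : ℂ) : ℂ := Complex.exp (hh y)

section CeAuxA
open MeasureTheory Set

lemma abs_exp_sub_one_le' (w : ℂ) :
    ‖Complex.exp w - 1‖ ≤ ‖w‖ * Real.exp (‖w‖) := by
  have hder : ∀ t ∈ Set.uIcc (0:ℝ) 1,
      HasDerivAt (fun t : ℝ => Complex.exp ((t : ℂ) * w)) (w * Complex.exp ((t : ℂ) * w)) t := by
    intro t _
    have h1 : HasDerivAt (fun z : ℂ => Complex.exp (z * w))
        (Complex.exp ((t : ℂ) * w) * (1 * w)) (t : ℂ) := ((hasDerivAt_id _).mul_const w).cexp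
    have := h1.comp_ofReal
    convert this using 1
    ring
  have hint : IntervalIntegrable (fun t : ℝ => w * Complex.exp ((t:ℂ) * w))
      MeasureTheory.volume 0 1 := by
    apply Continuous.intervalIntegrable
    exact continuous_const.mul (Complex.continuous_exp.comp (Complex.continuous_ofReal.mul continuous_const))
  have heq := intervalIntegral.integral_eq_sub_of_hasDerivAt hder hint
  have heq2 : Complex.exp w - 1 = ∫ t in (0:ℝ)..1, w * Complex.exp ((t:ℂ) * w) := by
    rw [heq]; norm_num
  rw [heq2]
  have hb := intervalIntegral.norm_integral_le_of_norm_le_const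
    (C := ‖w‖ * Real.exp (‖w‖))
    (f := fun t : ℝ => w * Complex.exp ((t:ℂ) * w)) (a := (0:ℝ)) (b := 1) ?_
  · simpa using hb
  · intro t ht
    rw [Set.uIoc_of_le (by norm_num : (0:ℝ) ≤ 1)] at ht
    have h1 : ‖w * Complex.exp ((t:ℂ) * w)‖ = ‖w‖ * Real.exp (((t:ℂ)*w).re) := by
      simp [Complex.norm_exp]
    rw [h1]
    apply mul_le_mul_of_nonneg_left _ (norm_nonneg w)
    apply Real.exp_le_exp.mpr
    calc ((t:ℂ)*w).re ≤ ‖(t:ℂ)*w‖ := Complex.re_le_norm _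
      _ = t * ‖w‖ := by
          rw [norm_mul, Complex.norm_real, Real.norm_eq_abs, abs_of_pos ht.1]
      _ ≤ 1 * ‖w‖ := by
          apply mul_le_mul_of_nonneg_right ht.2 (norm_nonneg w)
      _ = ‖w‖ := one_mul _

lemma hh_hasDerivAt (y₀ : ℂ) : HasDerivAt hh (pp y₀) y₀ := by
  set μ : Measure ℝ := volume.restrict (Set.Ioc (0:ℝ) 1) with hμ
  set F : ℂ → ℝ → ℂ := fun y s => (Complex.exp ((s : ℂ) ^ 3 * y ^ 3) - 1) / (s : ℂ) with hF
  set F' : ℂ → ℝ → ℂ := fun y s => 3 * (s : ℂ) ^ 2 * y ^ 2 * Complex.exp ((s : ℂ) ^ 3 * y ^ 3)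
    with hF'
  set R : ℝ := ‖y₀‖ + 1 with hR
  have hR0 : 0 < R := by positivity
  have habs : ∀ x ∈ ball y₀ 1, ‖x‖ ≤ R := by
    intro x hx
    have : dist x y₀ < 1 := mem_ball.mp hx
    calc ‖x‖ = ‖x - y₀ + y₀‖ := by ring_nf
      _ ≤ ‖x - y₀‖ + ‖y₀‖ := norm_add_le _ _
      _ ≤ R := by rw [hR]; have : ‖x - y₀‖ < 1 := (by rwa [← dist_eq_norm]); linarith
  have hmeasF : ∀ x : ℂ, AEStronglyMeasurable (F x) μ := by
    intro x
    apply ContinuousOn.aestronglyMeasurable _ measurableSet_Ioc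
    apply ContinuousOn.div
    · exact Continuous.continuousOn (by
        exact (Complex.continuous_exp.comp
          ((Complex.continuous_ofReal.pow 3).mul continuous_const)).sub continuous_const)
    · exact Complex.continuous_ofReal.continuousOn
    · intro s hs
      exact_mod_cast ne_of_gt hs.1
  have hexpbound : ∀ (x : ℂ) (s : ℝ), s ∈ Set.Ioc (0:ℝ) 1 → ‖x‖ ≤ R →
      ‖F x s‖ ≤ R ^ 3 * Real.exp (R ^ 3) := by
    intro x s hs hxR
    have hs0 : (0:ℝ) < s := hs.1
    have hs1 : s ≤ 1 := hs.2
    have hw : ‖(s : ℂ) ^ 3 * x ^ 3‖ = s ^ 3 * ‖x‖ ^ 3 := by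
      rw [norm_mul, norm_pow, norm_pow, Complex.norm_real, Real.norm_eq_abs, abs_of_pos hs0]
    have hwle : ‖(s : ℂ) ^ 3 * x ^ 3‖ ≤ R ^ 3 := by
      rw [hw]
      have h1 : s ^ 3 ≤ 1 := pow_le_one₀ hs0.le hs1
      have h2 : ‖x‖ ^ 3 ≤ R ^ 3 := pow_le_pow_left₀ (norm_nonneg x) hxR 3
      nlinarith [pow_pos hs0 3, norm_nonneg x, pow_nonneg (norm_nonneg x) 3]
    have key := abs_exp_sub_one_le' ((s : ℂ) ^ 3 * x ^ 3)
    have hnorm : ‖F x s‖ = ‖Complex.exp ((s : ℂ) ^ 3 * x ^ 3) - 1‖ / s := by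
      rw [hF]
      simp only [norm_div, Complex.norm_real, Real.norm_eq_abs, abs_of_pos hs0]
    rw [hnorm]
    rw [div_le_iff₀ hs0]
    calc ‖Complex.exp ((s : ℂ) ^ 3 * x ^ 3) - 1‖
        ≤ ‖(s : ℂ) ^ 3 * x ^ 3‖ * Real.exp (‖(s : ℂ) ^ 3 * x ^ 3‖) := key
      _ ≤ (s ^ 3 * ‖x‖ ^ 3) * Real.exp (R ^ 3) := by
          rw [hw]
          apply mul_le_mul_of_nonneg_left (Real.exp_le_exp.mpr (hw ▸ hwle))
          positivity
      _ ≤ R ^ 3 * Real.exp (R ^ 3) * s := by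
          have h3 : ‖x‖ ^ 3 ≤ R ^ 3 := pow_le_pow_left₀ (norm_nonneg x) hxR 3
          have hsq : s ^ 2 ≤ 1 := pow_le_one₀ hs0.le hs1
          have h5 : s ^ 2 * ‖x‖ ^ 3 ≤ R ^ 3 := by
            nlinarith [pow_nonneg (norm_nonneg x) 3]
          nlinarith [mul_nonneg (mul_nonneg hs0.le (Real.exp_pos (R ^ 3)).le)
            (sub_nonneg.mpr h5)]
  have hintF : Integrable (F y₀) μ := by
    apply Integrable.mono' (g := fun _ : ℝ => R ^ 3 * Real.exp (R ^ 3))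
    · rw [hμ]
      exact (MeasureTheory.integrableOn_const measure_Ioc_lt_top.ne)
    · exact hmeasF y₀
    · rw [hμ, MeasureTheory.ae_restrict_iff' measurableSet_Ioc]
      filter_upwards with s hs
      exact hexpbound y₀ s hs (by rw [hR]; linarith)
  have hmeasF' : AEStronglyMeasurable (F' y₀) μ :=
    Continuous.aestronglyMeasurable (by fun_prop)
  have hbound : ∀ᵐ s ∂μ, ∀ x ∈ ball y₀ 1, ‖F' x s‖ ≤ 3 * R ^ 2 * Real.exp (R ^ 3) := by
    rw [hμ, MeasureTheory.ae_restrict_iff' measurableSet_Ioc]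
    filter_upwards with s hs
    intro x hx
    have hxR := habs x hx
    have hs0 : (0:ℝ) < s := hs.1
    have hs1 : s ≤ 1 := hs.2
    have h1 : ‖F' x s‖ = 3 * s ^ 2 * ‖x‖ ^ 2 *
        Real.exp (((s : ℂ) ^ 3 * x ^ 3).re) := by
      simp [hF', Complex.norm_exp, Complex.norm_real, Real.norm_eq_abs, abs_of_pos hs0, norm_mul, norm_pow]
    rw [h1]
    have h2 : Real.exp (((s : ℂ) ^ 3 * x ^ 3).re) ≤ Real.exp (R ^ 3) := by
      apply Real.exp_le_exp.mpr
      calc ((s : ℂ) ^ 3 * x ^ 3).re ≤ ‖(s : ℂ) ^ 3 * x ^ 3‖ := Complex.re_le_norm _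
        _ = s ^ 3 * ‖x‖ ^ 3 := by
            rw [norm_mul, norm_pow, norm_pow, Complex.norm_real, Real.norm_eq_abs, abs_of_pos hs0]
        _ ≤ R ^ 3 := by
            have h1' : s ^ 3 ≤ 1 := pow_le_one₀ hs0.le hs1
            have h2' : ‖x‖ ^ 3 ≤ R ^ 3 := pow_le_pow_left₀ (norm_nonneg x) hxR 3
            nlinarith [pow_nonneg (norm_nonneg x) 3]
    have h3 : s ^ 2 ≤ 1 := pow_le_one₀ hs0.le hs1
    have h4 : ‖x‖ ^ 2 ≤ R ^ 2 := pow_le_pow_left₀ (norm_nonneg x) hxR 2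
    have h5 : s ^ 2 * ‖x‖ ^ 2 ≤ R ^ 2 := by
      nlinarith [pow_nonneg (norm_nonneg x) 2]
    nlinarith [mul_le_mul_of_nonneg_left h2
        (by positivity : (0:ℝ) ≤ 3 * (s ^ 2 * ‖x‖ ^ 2)),
      mul_le_mul_of_nonneg_right h5 (by positivity : (0:ℝ) ≤ 3 * Real.exp (R ^ 3))]
  have hdiff : ∀ᵐ s ∂μ, ∀ x ∈ ball y₀ 1, HasDerivAt (fun x => F x s) (F' x s) x := by
    rw [hμ, MeasureTheory.ae_restrict_iff' measurableSet_Ioc]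
    filter_upwards with s hs
    intro x _
    have hs0 : ((s : ℂ)) ≠ 0 := by exact_mod_cast ne_of_gt hs.1
    have h1 : HasDerivAt (fun x : ℂ => (Complex.exp ((s : ℂ) ^ 3 * x ^ 3) - 1) / (s : ℂ))
        ((Complex.exp ((s : ℂ) ^ 3 * x ^ 3) * ((s : ℂ) ^ 3 * (3 * x ^ 2))) / (s : ℂ)) x := by
      exact ((((hasDerivAt_pow 3 x).const_mul ((s:ℂ)^3)).cexp).sub_const 1).div_const (s : ℂ)
    convert h1 using 1
    field_simp
    ring
  have key := hasDerivAt_integral_of_dominated_loc_of_deriv_le (μ := μ)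
    (F := F) (F' := F') (x₀ := y₀) (bound := fun _ => 3 * R ^ 2 * Real.exp (R ^ 3))
    (ball_mem_nhds y₀ one_pos) (Filter.Eventually.of_forall fun x => hmeasF x) hintF hmeasF' hbound
    (by rw [hμ]; exact (MeasureTheory.integrableOn_const measure_Ioc_lt_top.ne)) hdiff
  have h2 := key.2
  have hhh : hh = fun y => ∫ s, F y s ∂μ := by
    funext y
    rw [hh, hμ, intervalIntegral.integral_of_le (by norm_num : (0:ℝ) ≤ 1)]
  have hpp : pp y₀ = ∫ s, F' y₀ s ∂μ := by
    rw [pp, hμ, intervalIntegral.integral_of_le (by norm_num : (0:ℝ) ≤ 1)]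
  rw [hhh, hpp]
  exact h2

lemma pp_key (y : ℂ) : y * pp y = Complex.exp (y ^ 3) - 1 := by
  have hder : ∀ s ∈ Set.uIcc (0:ℝ) 1,
      HasDerivAt (fun s : ℝ => Complex.exp ((s : ℂ) ^ 3 * y ^ 3))
        (y * (3 * (s : ℂ) ^ 2 * y ^ 2 * Complex.exp ((s : ℂ) ^ 3 * y ^ 3))) s := by
    intro s _
    have h1 : HasDerivAt (fun w : ℂ => Complex.exp (w ^ 3 * y ^ 3))
        (Complex.exp (((s:ℂ)) ^ 3 * y ^ 3) * ((3 : ℕ) * (s:ℂ) ^ 2 * y ^ 3)) (s : ℂ) := by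
      have := ((hasDerivAt_pow 3 ((s:ℂ))).mul_const (y ^ 3)).cexp
      convert this using 1
    have := h1.comp_ofReal
    convert this using 1
    push_cast
    ring
  have hint : IntervalIntegrable
      (fun s : ℝ => y * (3 * (s : ℂ) ^ 2 * y ^ 2 * Complex.exp ((s : ℂ) ^ 3 * y ^ 3)))
      MeasureTheory.volume 0 1 := by
    apply Continuous.intervalIntegrable
    fun_prop
  have heq := intervalIntegral.integral_eq_sub_of_hasDerivAt hder hint
  have h2 : y * pp y = ∫ s in (0:ℝ)..1,
      y * (3 * (s : ℂ) ^ 2 * y ^ 2 * Complex.exp ((s : ℂ) ^ 3 * y ^ 3)) := by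
    rw [pp, ← intervalIntegral.integral_const_mul]
  rw [h2, heq]
  norm_num

lemma hh_zero : hh 0 = 0 := by
  rw [hh]
  simp

lemma gg_zero : gg 0 = 1 := by rw [gg, hh_zero, Complex.exp_zero]

lemma gg_ne_zero (y : ℂ) : gg y ≠ 0 := Complex.exp_ne_zero _

lemma gg_hasDerivAt (y : ℂ) : HasDerivAt gg (pp y * gg y) y := by
  have := (hh_hasDerivAt y).cexp
  convert this using 1
  all_goals try rfl
  rw [gg]
  ring

lemma hh_diff : Differentiable ℂ hh := fun y => (hh_hasDerivAt y).differentiableAt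

lemma gg_diff : Differentiable ℂ gg := fun y => (gg_hasDerivAt y).differentiableAt

lemma pp_eq_deriv : pp = deriv hh := funext fun y => ((hh_hasDerivAt y).deriv).symm

lemma pp_cont : Continuous pp := by
  rw [pp_eq_deriv]
  have hA : AnalyticOnNhd ℂ hh Set.univ :=
    hh_diff.differentiableOn.analyticOnNhd isOpen_univ
  exact continuous_iff_continuousAt.mpr fun x =>
    ((hA.deriv) x (Set.mem_univ x)).continuousAt

lemma ppA : AnalyticOnNhd ℂ pp Set.univ := by
  rw [pp_eq_deriv]
  exact (hh_diff.differentiableOn.analyticOnNhd isOpen_univ).deriv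

lemma d1A : AnalyticOnNhd ℂ (deriv pp) Set.univ := ppA.deriv
lemma d2A : AnalyticOnNhd ℂ (deriv (deriv pp)) Set.univ := d1A.deriv
lemma d3A : AnalyticOnNhd ℂ (deriv (deriv (deriv pp))) Set.univ := d2A.deriv

lemma hpp' (y : ℂ) : HasDerivAt pp (deriv pp y) y :=
  ((ppA y (Set.mem_univ y)).differentiableAt).hasDerivAt
lemma hd1' (y : ℂ) : HasDerivAt (deriv pp) (deriv (deriv pp) y) y :=
  ((d1A y (Set.mem_univ y)).differentiableAt).hasDerivAt
lemma hd2' (y : ℂ) : HasDerivAt (deriv (deriv pp)) (deriv (deriv (deriv pp)) y) y :=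
  ((d2A y (Set.mem_univ y)).differentiableAt).hasDerivAt
lemma hd3' (y : ℂ) : HasDerivAt (deriv (deriv (deriv pp)))
    (deriv (deriv (deriv (deriv pp))) y) y :=
  ((d3A y (Set.mem_univ y)).differentiableAt).hasDerivAt

lemma I1 (y : ℂ) : pp y + y * deriv pp y = 3 * y ^ 2 * Complex.exp (y ^ 3) := by
  have hP : HasDerivAt (fun y => y * pp y) (pp y + y * deriv pp y) y := by
    have h := (hasDerivAt_id y).mul (hpp' y); simp at h; exact h
  have hQ : HasDerivAt (fun y : ℂ => Complex.exp (y ^ 3) - 1)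
      (3 * y ^ 2 * Complex.exp (y ^ 3)) y := by
    have := ((hasDerivAt_pow 3 y).cexp).sub_const 1
    convert this using 1
    all_goals try rfl
    push_cast
    ring
  have heq : (fun y : ℂ => y * pp y) = fun y : ℂ => Complex.exp (y ^ 3) - 1 :=
    funext pp_key
  exact (heq ▸ hP).unique hQ

lemma I2 (y : ℂ) : deriv pp y + (deriv pp y + y * deriv (deriv pp) y)
    = (6 * y + 9 * y ^ 4) * Complex.exp (y ^ 3) := by
  have hP : HasDerivAt (fun y => pp y + y * deriv pp y)
      (deriv pp y + (deriv pp y + y * deriv (deriv pp) y)) y := by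
    exact (hpp' y).add (by have h := (hasDerivAt_id y).mul (hd1' y); simp at h; exact h)
  have hQ : HasDerivAt (fun y : ℂ => 3 * y ^ 2 * Complex.exp (y ^ 3))
      ((6 * y + 9 * y ^ 4) * Complex.exp (y ^ 3)) y := by
    have := ((hasDerivAt_pow 2 y).const_mul (3:ℂ)).mul ((hasDerivAt_pow 3 y).cexp)
    convert this using 1
    all_goals try rfl
    push_cast
    ring
  have heq : (fun y : ℂ => pp y + y * deriv pp y)
      = fun y : ℂ => 3 * y ^ 2 * Complex.exp (y ^ 3) := funext I1
  exact (heq ▸ hP).unique hQ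

lemma I3 (y : ℂ) : deriv (deriv pp) y + (deriv (deriv pp) y +
      (deriv (deriv pp) y + y * deriv (deriv (deriv pp)) y))
    = (6 + 54 * y ^ 3 + 27 * y ^ 6) * Complex.exp (y ^ 3) := by
  have hP : HasDerivAt (fun y => deriv pp y + (deriv pp y + y * deriv (deriv pp) y))
      (deriv (deriv pp) y + (deriv (deriv pp) y +
        (deriv (deriv pp) y + y * deriv (deriv (deriv pp)) y))) y := by
    exact (hd1' y).add ((hd1' y).add (by have h := (hasDerivAt_id y).mul (hd2' y); simp at h; exact h))
  have hQ : HasDerivAt (fun y : ℂ => (6 * y + 9 * y ^ 4) * Complex.exp (y ^ 3))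
      ((6 + 54 * y ^ 3 + 27 * y ^ 6) * Complex.exp (y ^ 3)) y := by
    have := (((hasDerivAt_id y).const_mul (6:ℂ)).add
      ((hasDerivAt_pow 4 y).const_mul (9:ℂ))).mul ((hasDerivAt_pow 3 y).cexp)
    convert this using 1
    all_goals try rfl
    push_cast
    simp only [id_eq, Pi.add_apply]
    ring
  have heq : (fun y : ℂ => deriv pp y + (deriv pp y + y * deriv (deriv pp) y))
      = fun y : ℂ => (6 * y + 9 * y ^ 4) * Complex.exp (y ^ 3) := funext I2
  exact (heq ▸ hP).unique hQ

lemma pp_zero : pp 0 = 0 := by have := I1 0; simpa using this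
lemma d1_zero : deriv pp 0 = 0 := by have := I2 0; simpa using this
lemma d2_zero : deriv (deriv pp) 0 = 2 := by
  have := I3 0; simp at this; linear_combination this / 3

lemma d3_zero : deriv (deriv (deriv pp)) 0 = 0 := by
  have hP : HasDerivAt (fun y => deriv (deriv pp) y + (deriv (deriv pp) y +
        (deriv (deriv pp) y + y * deriv (deriv (deriv pp)) y)))
      (deriv (deriv (deriv pp)) 0 + (deriv (deriv (deriv pp)) 0 +
        (deriv (deriv (deriv pp)) 0 + (1 * deriv (deriv (deriv pp)) 0 +
          0 * deriv (deriv (deriv (deriv pp))) 0)))) 0 := by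
    exact (hd2' 0).add ((hd2' 0).add ((hd2' 0).add ((hasDerivAt_id 0).mul (hd3' 0))))
  have hQ : HasDerivAt (fun y : ℂ => (6 + 54 * y ^ 3 + 27 * y ^ 6) * Complex.exp (y ^ 3))
      (0 : ℂ) 0 := by
    have := ((((hasDerivAt_pow 3 (0:ℂ)).const_mul (54:ℂ)).const_add (6:ℂ)).add
      ((hasDerivAt_pow 6 (0:ℂ)).const_mul (27:ℂ))).mul ((hasDerivAt_pow 3 (0:ℂ)).cexp)
    convert this using 1
    all_goals try rfl
    norm_num [Pi.add_apply]
  have heq : (fun y : ℂ => deriv (deriv pp) y + (deriv (deriv pp) y +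
        (deriv (deriv pp) y + y * deriv (deriv (deriv pp)) y)))
      = fun y : ℂ => (6 + 54 * y ^ 3 + 27 * y ^ 6) * Complex.exp (y ^ 3) := funext I3
  have := (heq ▸ hP).unique hQ
  simp at this
  linear_combination this / 4

noncomputable def G1 (y : ℂ) : ℂ := pp y * gg y
noncomputable def G2 (y : ℂ) : ℂ := deriv pp y * gg y + pp y * G1 y
noncomputable def G3 (y : ℂ) : ℂ :=
  (deriv (deriv pp) y * gg y + deriv pp y * G1 y) + (deriv pp y * G1 y + pp y * G2 y)

lemma hG1 (y : ℂ) : HasDerivAt G1 (G2 y) y := (hpp' y).mul (gg_hasDerivAt y)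
lemma hG2 (y : ℂ) : HasDerivAt G2 (G3 y) y :=
  ((hd1' y).mul (gg_hasDerivAt y)).add ((hpp' y).mul (hG1 y))
lemma hG3_zero : HasDerivAt G3
    (((deriv (deriv (deriv pp)) 0 * gg 0 + deriv (deriv pp) 0 * G1 0)
      + (deriv (deriv pp) 0 * G1 0 + deriv pp 0 * G2 0))
    + ((deriv (deriv pp) 0 * G1 0 + deriv pp 0 * G2 0)
      + (deriv pp 0 * G2 0 + pp 0 * G3 0))) 0 :=
  (((hd2' 0).mul (gg_hasDerivAt 0)).add ((hd1' 0).mul (hG1 0))).add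
    (((hd1' 0).mul (hG1 0)).add ((hpp' 0).mul (hG2 0)))

lemma G1_zero : G1 0 = 0 := by rw [G1, pp_zero, gg_zero]; ring
lemma G2_zero : G2 0 = 0 := by rw [G2, d1_zero, pp_zero, gg_zero]; ring
lemma G3_zero : G3 0 = 2 := by
  rw [G3, d2_zero, d1_zero, pp_zero, gg_zero, G1_zero]; ring
lemma dG3_zero : deriv G3 0 = 0 := by
  rw [hG3_zero.deriv, d3_zero, d1_zero, pp_zero, G1_zero, G2_zero]; ring

lemma deriv_gg : deriv gg = G1 := funext fun y => (gg_hasDerivAt y).deriv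
lemma deriv_G1 : deriv G1 = G2 := funext fun y => (hG1 y).deriv
lemma deriv_G2 : deriv G2 = G3 := funext fun y => (hG2 y).deriv

lemma itd_gg1 : iteratedDeriv 1 gg 0 = 0 := by
  rw [iteratedDeriv_one, deriv_gg, G1_zero]
lemma itd_gg2 : iteratedDeriv 2 gg 0 = 0 := by
  rw [show (2:ℕ) = 1 + 1 from rfl, iteratedDeriv_succ', deriv_gg, iteratedDeriv_one,
    deriv_G1, G2_zero]
lemma itd_gg3 : iteratedDeriv 3 gg 0 = 2 := by
  rw [show (3:ℕ) = 2 + 1 from rfl, iteratedDeriv_succ', deriv_gg,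
    show (2:ℕ) = 1 + 1 from rfl, iteratedDeriv_succ', deriv_G1, iteratedDeriv_one,
    deriv_G2, G3_zero]
lemma itd_gg4 : iteratedDeriv 4 gg 0 = 0 := by
  rw [show (4:ℕ) = 3 + 1 from rfl, iteratedDeriv_succ', deriv_gg,
    show (3:ℕ) = 2 + 1 from rfl, iteratedDeriv_succ', deriv_G1,
    show (2:ℕ) = 1 + 1 from rfl, iteratedDeriv_succ', deriv_G2, iteratedDeriv_one,
    dG3_zero]

end CeAuxA

/-- The extremal function `f₂(z) = ∫_0^z exp (∫_0^y (e^{t³} − 1)/t dt) dy`, with both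
integrals along segments parametrized linearly: the inner integral from `0` to `y` is
`∫_0^1 (e^{s³y³} − 1)/s ds` (substituting `t = s·y`), and the outer integral from `0` to `z`
is `∫_0^1 z · (integrand at u·z) du` (substituting `y = u·z`). -/
noncomputable def f₂ (z : ℂ) : ℂ :=
  ∫ u in (0:ℝ)..1,
    z * Complex.exp
      (∫ s in (0:ℝ)..1, (Complex.exp ((s : ℂ) ^ 3 * ((u : ℂ) * z) ^ 3) - 1) / (s : ℂ))


section CeAuxB
open MeasureTheory Set

lemma f₂_eq (z : ℂ) : f₂ z = ∫ u in (0:ℝ)..1, z * gg ((u : ℂ) * z) := rfl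

lemma f₂_hasDerivAt (z₀ : ℂ) : HasDerivAt f₂ (gg z₀) z₀ := by
  set μ : Measure ℝ := volume.restrict (Set.Ioc (0:ℝ) 1) with hμ
  set F : ℂ → ℝ → ℂ := fun z u => z * gg ((u : ℂ) * z) with hF
  set F' : ℂ → ℝ → ℂ := fun z u =>
    gg ((u : ℂ) * z) + z * (pp ((u : ℂ) * z) * gg ((u : ℂ) * z) * (u : ℂ)) with hF'
  set R : ℝ := ‖z₀‖ + 1 with hR
  have hR0 : 0 < R := by positivity
  have habs : ∀ x ∈ ball z₀ 1, ‖x‖ ≤ R := by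
    intro x hx
    have h1 : dist x z₀ < 1 := mem_ball.mp hx
    calc ‖x‖ = ‖x - z₀ + z₀‖ := by ring_nf
      _ ≤ ‖x - z₀‖ + ‖z₀‖ := norm_add_le _ _
      _ ≤ R := by rw [hR]; have : ‖x - z₀‖ < 1 := (by rwa [← dist_eq_norm]); linarith
  obtain ⟨C₁, hC₁⟩ := (isCompact_closedBall (0:ℂ) R).exists_bound_of_continuousOn
    gg_diff.continuous.continuousOn
  obtain ⟨C₂, hC₂⟩ := (isCompact_closedBall (0:ℂ) R).exists_bound_of_continuousOn
    (pp_cont.mul gg_diff.continuous).continuousOn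
  have hC₂0 : 0 ≤ C₂ := le_trans (norm_nonneg _) (hC₂ 0 (mem_closedBall_self hR0.le))
  have hmem : ∀ (u : ℝ), u ∈ Set.Ioc (0:ℝ) 1 → ∀ x ∈ ball z₀ 1,
      ((u : ℂ) * x) ∈ closedBall (0:ℂ) R := by
    intro u hu x hx
    rw [mem_closedBall, dist_zero_right]
    have : ‖(u : ℂ) * x‖ = |u| * ‖x‖ := by
      simp [Complex.norm_real, Real.norm_eq_abs]
    rw [this, abs_of_pos hu.1]
    have h1 := habs x hx
    nlinarith [norm_nonneg x, hu.1, hu.2]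
  have hcF : ∀ x : ℂ, Continuous (F x) := fun x =>
    continuous_const.mul (gg_diff.continuous.comp (Complex.continuous_ofReal.mul continuous_const))
  have hcF' : Continuous (F' z₀) := by
    have hg : Continuous fun u : ℝ => gg ((u:ℂ) * z₀) :=
      gg_diff.continuous.comp (Complex.continuous_ofReal.mul continuous_const)
    have hp : Continuous fun u : ℝ => pp ((u:ℂ) * z₀) :=
      pp_cont.comp (Complex.continuous_ofReal.mul continuous_const)
    exact hg.add (continuous_const.mul ((hp.mul hg).mul Complex.continuous_ofReal))
  have hmeasF : ∀ x : ℂ, AEStronglyMeasurable (F x) μ :=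
    fun x => (hcF x).aestronglyMeasurable
  have hintF : Integrable (F z₀) μ := (hcF z₀).integrableOn_Ioc
  have hmeasF' : AEStronglyMeasurable (F' z₀) μ := hcF'.aestronglyMeasurable
  have hbound : ∀ᵐ u ∂μ, ∀ x ∈ ball z₀ 1, ‖F' x u‖ ≤ C₁ + R * C₂ := by
    rw [hμ, MeasureTheory.ae_restrict_iff' measurableSet_Ioc]
    filter_upwards with u hu
    intro x hx
    have hx1 : ‖x‖ ≤ R := habs x hx
    have hm := hmem u hu x hx
    have h1 : ‖gg ((u:ℂ) * x)‖ ≤ C₁ := hC₁ _ hm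
    have h2 : ‖pp ((u:ℂ) * x) * gg ((u:ℂ) * x)‖ ≤ C₂ := hC₂ _ hm
    calc ‖F' x u‖ ≤ ‖gg ((u:ℂ) * x)‖ + ‖x * (pp ((u:ℂ) * x) * gg ((u:ℂ) * x) * (u:ℂ))‖ :=
          norm_add_le _ _
      _ = ‖gg ((u:ℂ) * x)‖ + ‖x‖ * ‖pp ((u:ℂ) * x) * gg ((u:ℂ) * x)‖ * |u| := by
          simp [Complex.norm_real, Real.norm_eq_abs, mul_assoc]
      _ ≤ C₁ + R * C₂ := by
          rw [abs_of_pos hu.1]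
          have e1 : ‖x‖ * ‖pp ((u:ℂ) * x) * gg ((u:ℂ) * x)‖ ≤ R * C₂ :=
            mul_le_mul hx1 h2 (norm_nonneg _) hR0.le
          have h3 : ‖x‖ * ‖pp ((u:ℂ) * x) * gg ((u:ℂ) * x)‖ * u ≤ R * C₂ := by
            nlinarith [mul_le_mul_of_nonneg_right e1 hu.1.le,
              mul_le_mul_of_nonneg_left hu.2 (mul_nonneg hR0.le hC₂0),
              mul_nonneg (norm_nonneg x)
                (norm_nonneg (pp ((u:ℂ) * x) * gg ((u:ℂ) * x)))]
          linarith
  have hdiff : ∀ᵐ u ∂μ, ∀ x ∈ ball z₀ 1, HasDerivAt (fun x => F x u) (F' x u) x := by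
    refine Filter.Eventually.of_forall fun u => fun x _ => ?_
    have hinner : HasDerivAt (fun x : ℂ => gg ((u:ℂ) * x))
        (pp ((u:ℂ) * x) * gg ((u:ℂ) * x) * (u:ℂ)) x := by
      have := HasDerivAt.comp (x := x) (hh₂ := gg_hasDerivAt ((u:ℂ) * x))
        (hh := (hasDerivAt_id x).const_mul (u:ℂ))
      simpa [Function.comp_def] using this
    have := (hasDerivAt_id x).mul hinner
    convert this using 1
    all_goals try rfl
    rw [hF']
    simp only [id_eq]
    ring
  have key := hasDerivAt_integral_of_dominated_loc_of_deriv_le (μ := μ)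
    (F := F) (F' := F') (x₀ := z₀) (bound := fun _ => C₁ + R * C₂)
    (ball_mem_nhds z₀ one_pos) (Filter.Eventually.of_forall hmeasF) hintF hmeasF' hbound
    (by rw [hμ]; exact (MeasureTheory.integrableOn_const measure_Ioc_lt_top.ne)) hdiff
  have h2 := key.2
  have hf₂ : f₂ = fun z => ∫ u, F z u ∂μ := by
    funext z
    rw [f₂_eq, hμ, intervalIntegral.integral_of_le (by norm_num : (0:ℝ) ≤ 1)]
  have hval : (∫ u, F' z₀ u ∂μ) = gg z₀ := by
    rw [hμ, ← intervalIntegral.integral_of_le (by norm_num : (0:ℝ) ≤ 1)]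
    have hder : ∀ u ∈ Set.uIcc (0:ℝ) 1,
        HasDerivAt (fun u : ℝ => (u : ℂ) * gg ((u : ℂ) * z₀)) (F' z₀ u) u := by
      intro u _
      have hinner : HasDerivAt (fun w : ℂ => gg (w * z₀))
          (pp ((u:ℂ) * z₀) * gg ((u:ℂ) * z₀) * z₀) ((u:ℂ)) := by
        have := HasDerivAt.comp (x := ((u:ℂ))) (hh₂ := gg_hasDerivAt ((u:ℂ) * z₀))
          (hh := (hasDerivAt_id ((u:ℂ))).mul_const z₀)
        simpa [Function.comp_def] using this
      have h1 := (hasDerivAt_id ((u:ℂ))).mul hinner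
      have := h1.comp_ofReal
      convert this using 1
      all_goals try rfl
      rw [hF']
      simp only [id_eq]
      ring
    have hint : IntervalIntegrable (F' z₀) MeasureTheory.volume 0 1 := by
      apply Continuous.intervalIntegrable
      have hg := gg_diff.continuous
      have hp := pp_cont
      fun_prop
    rw [intervalIntegral.integral_eq_sub_of_hasDerivAt hder hint]
    push_cast
    simp [gg_zero]
  rw [hf₂, ← hval]
  exact h2

lemma f₂_zero : f₂ 0 = 0 := by rw [f₂]; simp

lemma f₂_diff : Differentiable ℂ f₂ := fun z => (f₂_hasDerivAt z).differentiableAt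

lemma deriv_f₂ : deriv f₂ = gg := funext fun z => (f₂_hasDerivAt z).deriv

lemma itd_f₂ (n : ℕ) : iteratedDeriv (n + 1) f₂ 0 = iteratedDeriv n gg 0 := by
  rw [iteratedDeriv_succ', deriv_f₂]

end CeAuxB

/-- The function `f₂` belongs to `C_e`, has `a₂ = a₃ = a₅ = 0`, `a₄ = 1/12`, and achieves
`|H₃,₁(f₂)| = 1/144`; hence the bound `|H₃,₁(f)| ≤ 1/144` on `C_e` is sharp. -/
theorem Ce_thirdHankelDet_sharp :
    ∃ a : ℕ → ℂ, InCe f₂ a ∧ a 2 = 0 ∧ a 3 = 0 ∧ a 4 = 1 / 12 ∧ a 5 = 0 ∧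
      ‖2 * a 2 * a 3 * a 4 - a 3 ^ 3 - a 4 ^ 2 - a 2 ^ 2 * a 5 + a 3 * a 5‖
        = 1 / 144 := by
  refine ⟨fun n => ((n.factorial : ℂ))⁻¹ * iteratedDeriv n f₂ 0, ?_, ?_, ?_, ?_, ?_, ?_⟩
  · refine ⟨?_, ?_, ?_, ?_, ?_⟩
    · exact f₂_diff.differentiableOn.analyticOnNhd isOpen_ball
    · simp [iteratedDeriv_zero, f₂_zero]
    · have h1 : iteratedDeriv 1 f₂ 0 = gg 0 := by rw [iteratedDeriv_one, deriv_f₂]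
      simp [h1, gg_zero]
    · intro z _
      have H := Complex.hasSum_taylorSeries_of_entire f₂_diff 0 z
      have heq : (fun n : ℕ => ((n.factorial : ℂ))⁻¹ * iteratedDeriv n f₂ 0 * z ^ n)
          = fun n : ℕ => ((n.factorial : ℂ))⁻¹ • (z - 0) ^ n • iteratedDeriv n f₂ 0 := by
        funext n
        simp [smul_eq_mul]
        ring
      rw [heq]
      exact H
    · refine ⟨fun z => z ^ 3, ?_, by simp, ?_, ?_⟩
      · exact fun z _ => (analyticAt_id).pow 3
      · intro z hz
        rw [norm_pow]
        have h1 : ‖z‖ < 1 := by simpa [mem_ball, dist_zero_right] using hz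
        exact pow_le_of_le_one (norm_nonneg z) h1.le (by norm_num)
      · intro z _
        have hdd : deriv (deriv f₂) z = pp z * gg z := by
          rw [deriv_f₂, (gg_hasDerivAt z).deriv]
        rw [hdd, deriv_f₂]
        rw [mul_div_assoc, mul_div_assoc, div_self (gg_ne_zero z), mul_one]
        have := pp_key z
        rw [show z * pp z = Complex.exp (z ^ 3) - 1 from this]
        ring
  · beta_reduce
    have := itd_f₂ 1
    rw [show (2:ℕ) = 1 + 1 from rfl, this, itd_gg1]
    simp
  · beta_reduce
    have := itd_f₂ 2
    rw [show (3:ℕ) = 2 + 1 from rfl, this, itd_gg2]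
    simp
  · beta_reduce
    have := itd_f₂ 3
    rw [show (4:ℕ) = 3 + 1 from rfl, this, itd_gg3]
    norm_num [Nat.factorial]
  · beta_reduce
    have := itd_f₂ 4
    rw [show (5:ℕ) = 4 + 1 from rfl, this, itd_gg4]
    simp
  · beta_reduce
    have h2 : ((2:ℕ).factorial : ℂ)⁻¹ * iteratedDeriv 2 f₂ 0 = 0 := by
      rw [show (2:ℕ) = 1 + 1 from rfl, itd_f₂ 1, itd_gg1]; simp
    have h3 : ((3:ℕ).factorial : ℂ)⁻¹ * iteratedDeriv 3 f₂ 0 = 0 := by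
      rw [show (3:ℕ) = 2 + 1 from rfl, itd_f₂ 2, itd_gg2]; simp
    have h4 : ((4:ℕ).factorial : ℂ)⁻¹ * iteratedDeriv 4 f₂ 0 = 1 / 12 := by
      rw [show (4:ℕ) = 3 + 1 from rfl, itd_f₂ 3, itd_gg3]; norm_num [Nat.factorial]
    have h5 : ((5:ℕ).factorial : ℂ)⁻¹ * iteratedDeriv 5 f₂ 0 = 0 := by
      rw [show (5:ℕ) = 4 + 1 from rfl, itd_f₂ 4, itd_gg4]; simp
    rw [h2, h3, h4, h5]
    have : (2 * 0 * 0 * (1 / 12) - 0 ^ 3 - (1 / 12 : ℂ) ^ 2 - 0 ^ 2 * 0 + 0 * 0)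
        = -(1 / 144) := by norm_num
    rw [this]
    simp
end

section
/- Let p be in the Carathéodory class P with expansion p(z) = 1 + Σ_{n≥1} p_n z^n, let w(z) = (p(z) − 1)/(p(z) + 1), and let f(z) = z + Σ_{n≥2} a_n z^n be analytic on 𝔻 with 1 + z f''(z)/f'(z) = e^{w(z)} for all z ∈ 𝔻 (so f ∈ C_e). Then a_2 = p_1/4, a_3 = (p_1^2 + 4 p_2)/48, a_4 = (−p_1^3 + 12 p_1 p_2 + 48 p_3)/1152, and a_5 = (p_1^4 − 12 p_1^2 p_2 + 24 p_1 p_3 + 144 p_4)/5760. -/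
open Complex Metric FormalMultilinearSeries Nat

lemma taylor_coeff_of_hasSum {g : ℂ → ℂ} {c : ℕ → ℂ}
    (h : ∀ z ∈ ball (0 : ℂ) 1, HasSum (fun n => c n * z ^ n) (g z)) (n : ℕ) :
    iteratedDeriv n g 0 = n ! * c n := by
  have hb : HasFPowerSeriesOnBall g (ofScalars ℂ c) 0 1 := by
    refine ⟨?_, one_pos, ?_⟩
    · refine ENNReal.le_of_forall_nnreal_lt fun r hr => ?_
      have hr1 : (r : ℝ) < 1 := by exact_mod_cast hr
      have hz : ((r : ℝ) : ℂ) ∈ ball (0 : ℂ) 1 := by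
        simp only [mem_ball, _root_.dist_zero_right, Complex.norm_real, Real.norm_eq_abs,
          _root_.abs_of_nonneg r.coe_nonneg]
        exact hr1
      have hsum := (h _ hz).summable
      apply le_radius_of_tendsto (l := 0)
      have ht := hsum.tendsto_atTop_zero.norm
      simp only [norm_zero] at ht
      have heq : (fun n => ‖ofScalars ℂ c n‖ * (r : ℝ) ^ n)
          = fun n => ‖c n * ((r : ℝ) : ℂ) ^ n‖ := by
        funext m
        rw [ofScalars_norm, norm_mul, norm_pow, Complex.norm_real, Real.norm_eq_abs,
          _root_.abs_of_nonneg r.coe_nonneg]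
      rw [heq]
      exact ht
    · intro y hy
      rw [mem_emetric_ball_zero_iff] at hy
      have hy' : y ∈ ball (0 : ℂ) 1 := by
        rw [mem_ball, _root_.dist_zero_right]
        have hy2 : ‖y‖₊ < 1 := by simpa [enorm_eq_nnnorm] using hy
        exact_mod_cast hy2
      have := h y hy'
      simp only [zero_add]
      convert this using 2 with m
      · rfl
      rw [ofScalars_apply_eq, smul_eq_mul]
  have h1 := hb.factorial_smul (1 : ℂ) n
  rw [iteratedDeriv_eq_iteratedFDeriv, ← h1, ofScalars_apply_eq]
  simp [smul_eq_mul]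

set_option maxHeartbeats 2000000 in
/-- Initial coefficient formulas for `C_e`: if `p` is in the Carathéodory class `P` with
coefficients `pc`, `w = (p − 1)/(p + 1)`, and `f` (with Taylor coefficients `a`) satisfies
`1 + z f''(z)/f'(z) = e^{w(z)}` on the unit disk, then `a₂, a₃, a₄, a₅` are as stated. -/
theorem Ce_initial_coefficients (p f : ℂ → ℂ) (pc a : ℕ → ℂ)
    (hp : AnalyticOnNhd ℂ p (ball (0 : ℂ) 1))
    (hpc0 : pc 0 = 1)
    (hpre : ∀ z ∈ ball (0 : ℂ) 1, 0 < (p z).re)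
    (hpsum : ∀ z ∈ ball (0 : ℂ) 1, HasSum (fun n => pc n * z ^ n) (p z))
    (hf : AnalyticOnNhd ℂ f (ball (0 : ℂ) 1))
    (ha0 : a 0 = 0) (ha1 : a 1 = 1)
    (hfsum : ∀ z ∈ ball (0 : ℂ) 1, HasSum (fun n => a n * z ^ n) (f z))
    (heq : ∀ z ∈ ball (0 : ℂ) 1,
      1 + z * deriv (deriv f) z / deriv f z = Complex.exp ((p z - 1) / (p z + 1))) :
    a 2 = pc 1 / 4 ∧
    a 3 = (pc 1 ^ 2 + 4 * pc 2) / 48 ∧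
    a 4 = (-(pc 1 ^ 3) + 12 * pc 1 * pc 2 + 48 * pc 3) / 1152 ∧
    a 5 = (pc 1 ^ 4 - 12 * pc 1 ^ 2 * pc 2 + 24 * pc 1 * pc 3 + 144 * pc 4) / 5760 := by
  have hA := taylor_coeff_of_hasSum hfsum
  have hP := taylor_coeff_of_hasSum hpsum
  set B := ball (0 : ℂ) 1 with hBdef
  have h0B : (0 : ℂ) ∈ B := mem_ball_self one_pos
  have hBn : B ∈ nhds (0 : ℂ) := isOpen_ball.mem_nhds h0B
  -- derivative towers
  set g1 := deriv f with hg1def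
  set g2 := deriv g1 with hg2def
  set g3 := deriv g2 with hg3def
  set g4 := deriv g3 with hg4def
  set g5 := deriv g4 with hg5def
  set g6 := deriv g5 with hg6def
  set q1 := deriv p with hq1def
  set q2 := deriv q1 with hq2def
  set q3 := deriv q2 with hq3def
  set q4 := deriv q3 with hq4def
  -- values at 0
  have hp0 : p 0 = 1 := by have := hP 0; simpa [iteratedDeriv_zero, hpc0] using this
  have hq1_0 : q1 0 = pc 1 := by
    have := hP 1; rw [iteratedDeriv_one] at this; simpa [hq1def] using this
  have hq2_0 : q2 0 = 2 * pc 2 := by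
    have := hP 2; rw [iteratedDeriv_succ, iteratedDeriv_one] at this
    rw [hq2def, hq1def]; simpa [Nat.factorial] using this
  have hq3_0 : q3 0 = 6 * pc 3 := by
    have := hP 3; rw [iteratedDeriv_succ, iteratedDeriv_succ, iteratedDeriv_one] at this
    rw [hq3def, hq2def, hq1def]; simpa [Nat.factorial] using this
  have hq4_0 : q4 0 = 24 * pc 4 := by
    have := hP 4
    rw [iteratedDeriv_succ, iteratedDeriv_succ, iteratedDeriv_succ, iteratedDeriv_one] at this
    rw [hq4def, hq3def, hq2def, hq1def]; simpa [Nat.factorial] using this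
  have hg1_0 : g1 0 = 1 := by
    have := hA 1; rw [iteratedDeriv_one] at this; rw [hg1def]; simpa [ha1] using this
  have hg2_0 : g2 0 = 2 * a 2 := by
    have := hA 2; rw [iteratedDeriv_succ, iteratedDeriv_one] at this
    rw [hg2def, hg1def]; simpa [Nat.factorial] using this
  have hg3_0 : g3 0 = 6 * a 3 := by
    have := hA 3; rw [iteratedDeriv_succ, iteratedDeriv_succ, iteratedDeriv_one] at this
    rw [hg3def, hg2def, hg1def]; simpa [Nat.factorial] using this
  have hg4_0 : g4 0 = 24 * a 4 := by
    have := hA 4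
    rw [iteratedDeriv_succ, iteratedDeriv_succ, iteratedDeriv_succ, iteratedDeriv_one] at this
    rw [hg4def, hg3def, hg2def, hg1def]; simpa [Nat.factorial] using this
  have hg5_0 : g5 0 = 120 * a 5 := by
    have := hA 5
    rw [iteratedDeriv_succ, iteratedDeriv_succ, iteratedDeriv_succ, iteratedDeriv_succ,
      iteratedDeriv_one] at this
    rw [hg5def, hg4def, hg3def, hg2def, hg1def]; simpa [Nat.factorial] using this
  -- nonvanishing denominator
  have hne : ∀ z ∈ B, p z + 1 ≠ 0 := by
    intro z hz h
    have h1 := hpre z hz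
    have h2 : p z = -1 := by linear_combination h
    rw [h2] at h1
    rw [show ((-1 : ℂ)).re = -1 by simp] at h1
    linarith
  -- analyticity of towers
  have hg1a : AnalyticOnNhd ℂ g1 B := by rw [hg1def]; exact hf.deriv
  have hg2a : AnalyticOnNhd ℂ g2 B := by rw [hg2def]; exact hg1a.deriv
  have hg3a : AnalyticOnNhd ℂ g3 B := by rw [hg3def]; exact hg2a.deriv
  have hg4a : AnalyticOnNhd ℂ g4 B := by rw [hg4def]; exact hg3a.deriv
  have hg5a : AnalyticOnNhd ℂ g5 B := by rw [hg5def]; exact hg4a.deriv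
  have hq1a : AnalyticOnNhd ℂ q1 B := by rw [hq1def]; exact hp.deriv
  have hq2a : AnalyticOnNhd ℂ q2 B := by rw [hq2def]; exact hq1a.deriv
  have hq3a : AnalyticOnNhd ℂ q3 B := by rw [hq3def]; exact hq2a.deriv
  -- HasDerivAt facts
  have Hp : ∀ z ∈ B, HasDerivAt p (q1 z) z := fun z hz => by
    rw [hq1def]; exact (hp z hz).differentiableAt.hasDerivAt
  have Hq1 : ∀ z ∈ B, HasDerivAt q1 (q2 z) z := fun z hz => by
    rw [hq2def]; exact (hq1a z hz).differentiableAt.hasDerivAt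
  have Hq2 : ∀ z ∈ B, HasDerivAt q2 (q3 z) z := fun z hz => by
    rw [hq3def]; exact (hq2a z hz).differentiableAt.hasDerivAt
  have Hq3 : ∀ z ∈ B, HasDerivAt q3 (q4 z) z := fun z hz => by
    rw [hq4def]; exact (hq3a z hz).differentiableAt.hasDerivAt
  have Hg1 : ∀ z ∈ B, HasDerivAt g1 (g2 z) z := fun z hz => by
    rw [hg2def]; exact (hg1a z hz).differentiableAt.hasDerivAt
  have Hg2 : ∀ z ∈ B, HasDerivAt g2 (g3 z) z := fun z hz => by
    rw [hg3def]; exact (hg2a z hz).differentiableAt.hasDerivAt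
  have Hg3 : ∀ z ∈ B, HasDerivAt g3 (g4 z) z := fun z hz => by
    rw [hg4def]; exact (hg3a z hz).differentiableAt.hasDerivAt
  have Hg4 : ∀ z ∈ B, HasDerivAt g4 (g5 z) z := fun z hz => by
    rw [hg5def]; exact (hg4a z hz).differentiableAt.hasDerivAt
  have Hg5 : ∀ z ∈ B, HasDerivAt g5 (g6 z) z := fun z hz => by
    rw [hg6def]; exact ((hg5a z hz).differentiableAt).hasDerivAt
  -- the W functions and exponential
  set W1 : ℂ → ℂ := fun z => 2 * q1 z / (p z + 1) ^ 2 with hW1def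
  set W2 : ℂ → ℂ := fun z =>
    (2 * q2 z * (p z + 1) - 4 * q1 z ^ 2) / (p z + 1) ^ 3 with hW2def
  set W3 : ℂ → ℂ := fun z =>
    (2 * q3 z * (p z + 1) ^ 2 - 12 * (q1 z * q2 z) * (p z + 1) + 12 * q1 z ^ 3)
      / (p z + 1) ^ 4 with hW3def
  set W4 : ℂ → ℂ := fun z =>
    (2 * q4 z * (p z + 1) ^ 3 - 16 * (q1 z * q3 z) * (p z + 1) ^ 2 - 12 * q2 z ^ 2 * (p z + 1) ^ 2
      + 72 * (q1 z ^ 2 * q2 z) * (p z + 1) - 48 * q1 z ^ 4) / (p z + 1) ^ 5 with hW4def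
  set Ex : ℂ → ℂ := fun z => Complex.exp ((p z - 1) / (p z + 1)) with hExdef
  have HW1 : ∀ z ∈ B, HasDerivAt W1 (W2 z) z := by
    intro z hz
    have hP := hne z hz
    have h := ((Hq1 z hz).const_mul 2).div (((Hp z hz).add_const 1).pow 2)
      (pow_ne_zero 2 hP)
    refine h.congr_deriv (Eq.symm ?_)
    rw [hW2def]
    simp only [Pi.mul_apply, Pi.add_apply, Pi.sub_apply, Pi.pow_apply]
    rw [div_eq_div_iff (pow_ne_zero 3 hP) (pow_ne_zero 2 (pow_ne_zero 2 hP))]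
    push_cast
    ring
  have HW2 : ∀ z ∈ B, HasDerivAt W2 (W3 z) z := by
    intro z hz
    have hP := hne z hz
    have hnum := (((Hq2 z hz).const_mul 2).mul ((Hp z hz).add_const 1)).sub
      (((Hq1 z hz).pow 2).const_mul 4)
    have h := hnum.div (((Hp z hz).add_const 1).pow 3) (pow_ne_zero 3 hP)
    refine h.congr_deriv (Eq.symm ?_)
    rw [hW3def]
    simp only [Pi.mul_apply, Pi.add_apply, Pi.sub_apply, Pi.pow_apply]
    rw [div_eq_div_iff (pow_ne_zero 4 hP) (pow_ne_zero 2 (pow_ne_zero 3 hP))]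
    push_cast
    ring
  have HW3 : ∀ z ∈ B, HasDerivAt W3 (W4 z) z := by
    intro z hz
    have hP := hne z hz
    have hnum := ((((Hq3 z hz).const_mul 2).mul (((Hp z hz).add_const 1).pow 2)).sub
      ((((Hq1 z hz).mul (Hq2 z hz)).const_mul 12).mul ((Hp z hz).add_const 1))).add
      (((Hq1 z hz).pow 3).const_mul 12)
    have h := hnum.div (((Hp z hz).add_const 1).pow 4) (pow_ne_zero 4 hP)
    refine h.congr_deriv (Eq.symm ?_)
    rw [hW4def]
    simp only [Pi.mul_apply, Pi.add_apply, Pi.sub_apply, Pi.pow_apply]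
    rw [div_eq_div_iff (pow_ne_zero 5 hP) (pow_ne_zero 2 (pow_ne_zero 4 hP))]
    push_cast
    ring
  have HE : ∀ z ∈ B, HasDerivAt Ex (W1 z * Ex z) z := by
    intro z hz
    have hP := hne z hz
    have Hw : HasDerivAt (fun y => (p y - 1) / (p y + 1)) (W1 z) z := by
      have h := ((Hp z hz).sub_const 1).div ((Hp z hz).add_const 1) hP
      refine h.congr_deriv (Eq.symm ?_)
      rw [hW1def]
      simp only [Pi.mul_apply, Pi.add_apply, Pi.sub_apply, Pi.pow_apply]
      rw [div_eq_div_iff (pow_ne_zero 2 hP) (pow_ne_zero 2 hP)]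
      ring
    have h2 := Hw.cexp
    rw [hExdef]
    refine h2.congr_deriv (Eq.symm ?_)
    ring
  -- the L and R functions
  set L0 : ℂ → ℂ := fun z => g1 z + z * g2 z with hL0def
  set L1 : ℂ → ℂ := fun z => 2 * g2 z + z * g3 z with hL1def
  set L2 : ℂ → ℂ := fun z => 3 * g3 z + z * g4 z with hL2def
  set L3 : ℂ → ℂ := fun z => 4 * g4 z + z * g5 z with hL3def
  set L4 : ℂ → ℂ := fun z => 5 * g5 z + z * g6 z with hL4def
  set R0 : ℂ → ℂ := fun z => Ex z * g1 z with hR0def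
  set R1 : ℂ → ℂ := fun z => W1 z * Ex z * g1 z + Ex z * g2 z with hR1def
  set R2 : ℂ → ℂ := fun z => (W2 z + W1 z ^ 2) * Ex z * g1 z + 2 * W1 z * Ex z * g2 z
    + Ex z * g3 z with hR2def
  set R3 : ℂ → ℂ := fun z => (W3 z + 3 * W1 z * W2 z + W1 z ^ 3) * Ex z * g1 z
    + 3 * (W2 z + W1 z ^ 2) * Ex z * g2 z + 3 * W1 z * Ex z * g3 z + Ex z * g4 z with hR3def
  set R4 : ℂ → ℂ := fun z => (W4 z + 4 * W1 z * W3 z + 3 * W2 z ^ 2 + 6 * W1 z ^ 2 * W2 z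
    + W1 z ^ 4) * Ex z * g1 z + 4 * (W3 z + 3 * W1 z * W2 z + W1 z ^ 3) * Ex z * g2 z
    + 6 * (W2 z + W1 z ^ 2) * Ex z * g3 z + 4 * W1 z * Ex z * g4 z + Ex z * g5 z with hR4def
  have HL0 : ∀ z ∈ B, HasDerivAt L0 (L1 z) z := by
    intro z hz
    have h := (Hg1 z hz).add ((hasDerivAt_id z).mul (Hg2 z hz))
    refine h.congr_deriv (Eq.symm ?_)
    rw [hL1def]; simp only [id_eq]; ring
  have HL1 : ∀ z ∈ B, HasDerivAt L1 (L2 z) z := by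
    intro z hz
    have h := ((Hg2 z hz).const_mul 2).add ((hasDerivAt_id z).mul (Hg3 z hz))
    refine h.congr_deriv (Eq.symm ?_)
    rw [hL2def]; simp only [id_eq]; ring
  have HL2 : ∀ z ∈ B, HasDerivAt L2 (L3 z) z := by
    intro z hz
    have h := ((Hg3 z hz).const_mul 3).add ((hasDerivAt_id z).mul (Hg4 z hz))
    refine h.congr_deriv (Eq.symm ?_)
    rw [hL3def]; simp only [id_eq]; ring
  have HL3 : ∀ z ∈ B, HasDerivAt L3 (L4 z) z := by
    intro z hz
    have h := ((Hg4 z hz).const_mul 4).add ((hasDerivAt_id z).mul (Hg5 z hz))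
    refine h.congr_deriv (Eq.symm ?_)
    rw [hL4def]; simp only [id_eq]; ring
  have HR0 : ∀ z ∈ B, HasDerivAt R0 (R1 z) z := by
    intro z hz
    have h := (HE z hz).mul (Hg1 z hz)
    refine h.congr_deriv (Eq.symm ?_)
    rfl
  have HR1 : ∀ z ∈ B, HasDerivAt R1 (R2 z) z := by
    intro z hz
    have h := (((HW1 z hz).mul (HE z hz)).mul (Hg1 z hz)).add ((HE z hz).mul (Hg2 z hz))
    refine h.congr_deriv (Eq.symm ?_)
    simp only [Pi.mul_apply, Pi.add_apply, Pi.sub_apply, Pi.pow_apply]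
    rw [hR2def]; ring
  have HR2 : ∀ z ∈ B, HasDerivAt R2 (R3 z) z := by
    intro z hz
    have h := (((((HW2 z hz).add ((HW1 z hz).pow 2)).mul (HE z hz)).mul (Hg1 z hz)).add
      ((((HW1 z hz).const_mul 2).mul (HE z hz)).mul (Hg2 z hz))).add
      ((HE z hz).mul (Hg3 z hz))
    refine h.congr_deriv (Eq.symm ?_)
    simp only [Pi.mul_apply, Pi.add_apply, Pi.sub_apply, Pi.pow_apply]
    rw [hR3def]; push_cast; ring
  have HR3 : ∀ z ∈ B, HasDerivAt R3 (R4 z) z := by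
    intro z hz
    have h := (((((((HW3 z hz).add (((HW1 z hz).const_mul 3).mul (HW2 z hz))).add
      ((HW1 z hz).pow 3)).mul (HE z hz)).mul (Hg1 z hz)).add
      ((((((HW2 z hz).add ((HW1 z hz).pow 2)).const_mul 3).mul (HE z hz)).mul (Hg2 z hz)))).add
      ((((HW1 z hz).const_mul 3).mul (HE z hz)).mul (Hg3 z hz))).add
      ((HE z hz).mul (Hg4 z hz))
    refine h.congr_deriv (Eq.symm ?_)
    simp only [Pi.mul_apply, Pi.add_apply, Pi.sub_apply, Pi.pow_apply]
    rw [hR4def]; push_cast; ring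
  -- the eventual equation and its derivatives
  have hg1c : ContinuousAt g1 0 := (hg1a 0 h0B).continuousAt
  have hne1 : ∀ᶠ z in nhds (0 : ℂ), g1 z ≠ 0 :=
    hg1c.eventually_ne (by rw [hg1_0]; exact one_ne_zero)
  have e0 : L0 =ᶠ[nhds (0 : ℂ)] R0 := by
    filter_upwards [hne1, hBn] with z hz1 hz2
    have h := heq z hz2
    rw [hL0def, hR0def, hExdef]
    simp only
    rw [← h]
    field_simp
  have dL0 : deriv L0 =ᶠ[nhds (0 : ℂ)] L1 :=
    Filter.eventuallyEq_of_mem hBn fun z hz => (HL0 z hz).deriv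
  have dL1 : deriv L1 =ᶠ[nhds (0 : ℂ)] L2 :=
    Filter.eventuallyEq_of_mem hBn fun z hz => (HL1 z hz).deriv
  have dL2 : deriv L2 =ᶠ[nhds (0 : ℂ)] L3 :=
    Filter.eventuallyEq_of_mem hBn fun z hz => (HL2 z hz).deriv
  have dL3 : deriv L3 =ᶠ[nhds (0 : ℂ)] L4 :=
    Filter.eventuallyEq_of_mem hBn fun z hz => (HL3 z hz).deriv
  have dR0 : deriv R0 =ᶠ[nhds (0 : ℂ)] R1 :=
    Filter.eventuallyEq_of_mem hBn fun z hz => (HR0 z hz).deriv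
  have dR1 : deriv R1 =ᶠ[nhds (0 : ℂ)] R2 :=
    Filter.eventuallyEq_of_mem hBn fun z hz => (HR1 z hz).deriv
  have dR2 : deriv R2 =ᶠ[nhds (0 : ℂ)] R3 :=
    Filter.eventuallyEq_of_mem hBn fun z hz => (HR2 z hz).deriv
  have dR3 : deriv R3 =ᶠ[nhds (0 : ℂ)] R4 :=
    Filter.eventuallyEq_of_mem hBn fun z hz => (HR3 z hz).deriv
  have e1 : L1 =ᶠ[nhds (0 : ℂ)] R1 := dL0.symm.trans (e0.deriv.trans dR0)
  have e2 : L2 =ᶠ[nhds (0 : ℂ)] R2 := dL1.symm.trans (e1.deriv.trans dR1)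
  have e3 : L3 =ᶠ[nhds (0 : ℂ)] R3 := dL2.symm.trans (e2.deriv.trans dR2)
  have e4 : L4 =ᶠ[nhds (0 : ℂ)] R4 := dL3.symm.trans (e3.deriv.trans dR3)
  have E1 := e1.eq_of_nhds
  have E2 := e2.eq_of_nhds
  have E3 := e3.eq_of_nhds
  have E4 := e4.eq_of_nhds
  -- values of W and Ex at 0
  have hEx0 : Ex 0 = 1 := by
    rw [hExdef]; simp only; rw [hp0]; simp
  -- turn E1..E4 into algebraic equations
  simp only [hL1def, hR1def, hW1def] at E1
  rw [hg1_0, hg2_0, hg3_0, hq1_0, hp0, hEx0] at E1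
  simp only [hL2def, hR2def, hW1def, hW2def] at E2
  rw [hg1_0, hg2_0, hg3_0, hg4_0, hq1_0, hq2_0, hp0, hEx0] at E2
  simp only [hL3def, hR3def, hW1def, hW2def, hW3def] at E3
  rw [hg1_0, hg2_0, hg3_0, hg4_0, hg5_0, hq1_0, hq2_0, hq3_0, hp0, hEx0] at E3
  simp only [hL4def, hR4def, hW1def, hW2def, hW3def, hW4def] at E4
  rw [hg1_0, hg2_0, hg3_0, hg4_0, hg5_0, hq1_0, hq2_0, hq3_0, hq4_0, hp0, hEx0] at E4
  have ha2 : a 2 = pc 1 / 4 := by linear_combination E1 / 2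
  rw [ha2] at E2
  have ha3 : a 3 = (pc 1 ^ 2 + 4 * pc 2) / 48 := by linear_combination E2 / 12
  rw [ha2, ha3] at E3
  have ha4 : a 4 = (-(pc 1 ^ 3) + 12 * pc 1 * pc 2 + 48 * pc 3) / 1152 := by
    linear_combination E3 / 72
  rw [ha2, ha3, ha4] at E4
  have ha5 : a 5 = (pc 1 ^ 4 - 12 * pc 1 ^ 2 * pc 2 + 24 * pc 1 * pc 3 + 144 * pc 4) / 5760 := by
    linear_combination E4 / 480
  exact ⟨ha2, ha3, ha4, ha5⟩
end
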